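/- For any finite poset Q and any positive integer n ≤ |Q|, the exchange graph G_n(Q) is connected. Furthermore, for any two vertices A and B of G_n(Q), the graph distance between A and B equals |A \ (A ∩ B)|; in particular the diameter of G_n(Q) is at most n. -/

import Mathlib

/-!
Formalization framework: finite posets are bundled as `FinPartOrd.{0}`, downsets are
`Finset`s of elements, unlabelled posets are isomorphism classes (`UPoset`), and a witness
of a set `Γ` of unlabelled posets at size `n` is a finite poset whose set of size-`n`
downsets, up to isomorphism, is exactly `Γ`.
-/

attribute [local instance] Classical.propDecidable

noncomputable section

open Finset

/-- `D` is a downset of the finite poset `Q`. -/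
def IsDownset (Q : FinPartOrd.{0}) (D : Finset ↥Q) : Prop :=
  ∀ ⦃a b : ↥Q⦄, a ∈ D → b ≤ a → b ∈ D

/-- The induced subposet of `Q` on a finset `D` of its elements. -/
def subposet (Q : FinPartOrd.{0}) (D : Finset ↥Q) : FinPartOrd.{0} :=
  FinPartOrd.of {x : ↥Q // x ∈ D}

/-- The isomorphism setoid on finite posets. -/
def isoSetoid : Setoid FinPartOrd.{0} where
  r P Q := Nonempty (↥P ≃o ↥Q)
  iseqv := ⟨fun _ => ⟨OrderIso.refl _⟩, fun ⟨e⟩ => ⟨e.symm⟩, fun ⟨e⟩ ⟨f⟩ => ⟨e.trans f⟩⟩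

/-- Unlabelled finite posets: isomorphism classes of finite posets. -/
def UPoset := Quotient isoSetoid

/-- The isomorphism class of a finite poset. -/
def cls (P : FinPartOrd.{0}) : UPoset := Quotient.mk isoSetoid P

/-- The number of elements of a finite poset. -/
def size (Q : FinPartOrd.{0}) : ℕ := Fintype.card ↥Q

/-- The size of an isomorphism class of finite posets. -/
def usize : UPoset → ℕ :=
  Quotient.lift size fun _ _ h => h.elim fun e => Fintype.card_congr e.toEquiv

/-- `D_n(Q)` : the set of downsets of `Q` of size `n`, up to isomorphism. -/
def DSet (n : ℕ) (Q : FinPartOrd.{0}) : Set UPoset :=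
  {c | ∃ D : Finset ↥Q, IsDownset Q D ∧ D.card = n ∧ cls (subposet Q D) = c}

/-- `d_n(Q)` : the number of isomorphism classes of downsets of `Q` of size `n`. -/
def dNum (n : ℕ) (Q : FinPartOrd.{0}) : ℕ := (DSet n Q).ncard

/-- `D(Q)` : the set of nonempty downsets of `Q`, up to isomorphism. -/
def DAllSet (Q : FinPartOrd.{0}) : Set UPoset :=
  {c | ∃ D : Finset ↥Q, IsDownset Q D ∧ D.Nonempty ∧ cls (subposet Q D) = c}

/-- `Q` is a witness of the set `Γ` of unlabelled posets (at size `n`): the set of size-`n`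
downsets of `Q`, up to isomorphism, is exactly `Γ`. -/
def IsWitness (n : ℕ) (Γ : Set UPoset) (Q : FinPartOrd.{0}) : Prop := DSet n Q = Γ

/-- `Q` is a minimal witness of `Γ` : `Q` is a witness and no proper downset of `Q` is
itself a witness of `Γ`. -/
def IsMinimalWitness (n : ℕ) (Γ : Set UPoset) (Q : FinPartOrd.{0}) : Prop :=
  IsWitness n Γ Q ∧
    ∀ D : Finset ↥Q, IsDownset Q D → D ≠ Finset.univ → ¬IsWitness n Γ (subposet Q D)

/-- The height of an element: the number of elements of a longest chain whose maximum is `x`. -/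
def heightEl (Q : FinPartOrd.{0}) (x : ↥Q) : ℕ :=
  sSup {k | ∃ c : Finset ↥Q, IsChain (· ≤ ·) (c : Set ↥Q) ∧ x ∈ c ∧ (∀ y ∈ c, y ≤ x) ∧ c.card = k}

/-- The height of a finite poset: the number of elements of a longest chain. -/
def posetHeight (Q : FinPartOrd.{0}) : ℕ :=
  sSup {k | ∃ c : Finset ↥Q, IsChain (· ≤ ·) (c : Set ↥Q) ∧ c.card = k}

/-- A finite poset is Newtonian if every element of level `i` covers every element of
level `i - 1`. -/
def Newtonian (Q : FinPartOrd.{0}) : Prop :=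
  ∀ x y : ↥Q, heightEl Q y = heightEl Q x + 1 → x ⋖ y

/-- A finite poset is connected if it is nonempty and any two elements are joined by a
comparability path. -/
def ConnectedPoset (Q : FinPartOrd.{0}) : Prop :=
  Nonempty ↥Q ∧ ∀ x y : ↥Q, Relation.ReflTransGen (fun a b : ↥Q => a ≤ b ∨ b ≤ a) x y

/-- `x` is a maximal element of the subset `W` of `Q`. -/
def IsMaxIn (Q : FinPartOrd.{0}) (W : Finset ↥Q) (x : ↥Q) : Prop :=
  x ∈ W ∧ ∀ y ∈ W, x ≤ y → y = x

/-- `x` is a maximal element of the finite poset `R`. -/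
def IsMaxEl (R : FinPartOrd.{0}) (x : ↥R) : Prop := ∀ y, x ≤ y → y = x

/-- A poset of type 𝒲 : the disjoint union of two connected Newtonian posets that are not
isomorphic, but which only differ in one maximal element (they become isomorphic after the
removal of a suitable maximal element from each). -/
def TypeW (P : FinPartOrd.{0}) : Prop :=
  ∃ W₁ W₂ : Finset ↥P,
    W₁ ∪ W₂ = Finset.univ ∧ Disjoint W₁ W₂ ∧
    (∀ x ∈ W₁, ∀ y ∈ W₂, ¬x ≤ y ∧ ¬y ≤ x) ∧
    ConnectedPoset (subposet P W₁) ∧ ConnectedPoset (subposet P W₂) ∧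
    Newtonian (subposet P W₁) ∧ Newtonian (subposet P W₂) ∧
    ¬Nonempty (↥(subposet P W₁) ≃o ↥(subposet P W₂)) ∧
    ∃ x y, IsMaxIn P W₁ x ∧ IsMaxIn P W₂ y ∧
      Nonempty (↥(subposet P (W₁.erase x)) ≃o ↥(subposet P (W₂.erase y)))

/-- An antichain on `i` elements. -/
def AntichainFin (i : ℕ) : Type := Fin i

instance (i : ℕ) : PartialOrder (AntichainFin i) where
  le x y := x = y
  le_refl _ := rfl
  le_trans a b c h₁ h₂ := show a = c from (show a = b from h₁).trans (show b = c from h₂)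
  le_antisymm _ _ h _ := h

instance (i : ℕ) : Fintype (AntichainFin i) := inferInstanceAs (Fintype (Fin i))
instance (i : ℕ) : Fintype (WithTop (AntichainFin i)) :=
  inferInstanceAs (Fintype (Option (Fin i)))

/-- `Λ_i`: the poset with `i` minimal elements and one maximal element above all of them. -/
def Lambda (i : ℕ) : FinPartOrd.{0} := FinPartOrd.of (WithTop (AntichainFin i))

/-- `k` disjoint copies of a poset `α`. -/
def Copies (k : ℕ) (α : Type) : Type := Fin k × α

instance (k : ℕ) (α : Type) [PartialOrder α] : PartialOrder (Copies k α) where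
  le x y := x.1 = y.1 ∧ x.2 ≤ y.2
  le_refl _ := ⟨rfl, le_refl _⟩
  le_trans _ _ _ h₁ h₂ := ⟨h₁.1.trans h₂.1, le_trans h₁.2 h₂.2⟩
  le_antisymm x y h₁ h₂ := by
    obtain ⟨x₁, x₂⟩ := x
    obtain ⟨y₁, y₂⟩ := y
    obtain ⟨h, h'⟩ := h₁
    cases h
    exact congrArg _ (le_antisymm h' h₂.2)

instance (k : ℕ) (α : Type) [Fintype α] : Fintype (Copies k α) :=
  inferInstanceAs (Fintype (Fin k × α))

/-- `H_ℓ`: the poset whose connected components are `ℓ` copies of `Λ₂` and one copy of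
`Λ_{3(ℓ-1)}`. -/
def Hposet (ℓ : ℕ) : FinPartOrd.{0} :=
  FinPartOrd.of (Copies ℓ (WithTop (AntichainFin 2)) ⊕ WithTop (AntichainFin (3 * (ℓ - 1))))

/-- The poset `P₀` placed above a chain of `i` elements. -/
def withChain (P₀ : FinPartOrd.{0}) (i : ℕ) : FinPartOrd.{0} :=
  FinPartOrd.of (Fin i ⊕ₗ ↥P₀)

/-- The disjoint union of two finite posets. -/
def disjSum (P R : FinPartOrd.{0}) : FinPartOrd.{0} := FinPartOrd.of (↥P ⊕ ↥R)

/-- The poset `P_iR_i`: the disjoint union of `P₀` and `R₀` each placed above a chain of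
`i` elements. -/
def PRposet (P₀ R₀ : FinPartOrd.{0}) (i : ℕ) : FinPartOrd.{0} :=
  disjSum (withChain P₀ i) (withChain R₀ i)

/-- `C(P₀R₀) = |D(P₀)| + |D(R₀)| − |D(P₀) ∩ D(R₀)|`. -/
def CNum (P₀ R₀ : FinPartOrd.{0}) : ℕ :=
  (DAllSet P₀).ncard + (DAllSet R₀).ncard - (DAllSet P₀ ∩ DAllSet R₀).ncard

/-- The vertices of the exchange graph: the downsets of `Q` of size `n`, as actual subsets. -/
def EGVert (n : ℕ) (Q : FinPartOrd.{0}) : Type :=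
  {D : Finset ↥Q // IsDownset Q D ∧ D.card = n}

/-- The exchange graph `G_n(Q)`: two size-`n` downsets are adjacent iff they differ by
exactly one element. -/
def ExchangeGraph (n : ℕ) (Q : FinPartOrd.{0}) : SimpleGraph (EGVert n Q) where
  Adj X Y := (X.1 \ Y.1).card = 1 ∧ (Y.1 \ X.1).card = 1
  symm := ⟨fun X Y h => ⟨h.2, h.1⟩⟩
  loopless := ⟨fun X h => by
    simp only [Finset.sdiff_self, Finset.card_empty] at h
    exact absurd h.1 (by simp)⟩

/-- The downset `D` of `Q`, viewed as a poset, is isomorphic (a "copy of") `P`. -/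
def IsoTo (Q : FinPartOrd.{0}) (D : Finset ↥Q) (P : FinPartOrd.{0}) : Prop :=
  Nonempty (↥(subposet Q D) ≃o ↥P)

/-- A path `A :: M ++ [C]` in the exchange graph `G_n(Q)` whose first vertex is a copy of
`Pa`, whose last vertex is a copy of `Pb`, and all of whose internal vertices are copies of
`Pmid`. -/
def SpecialPath (n : ℕ) (Q : FinPartOrd.{0}) (Pa Pmid Pb : FinPartOrd.{0})
    (A : EGVert n Q) (M : List (EGVert n Q)) (C : EGVert n Q) : Prop :=
  List.Chain' (ExchangeGraph n Q).Adj (A :: M ++ [C]) ∧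
    IsoTo Q A.1 Pa ∧ IsoTo Q C.1 Pb ∧ ∀ v ∈ M, IsoTo Q v.1 Pmid

/-- `T` is an antichain in `Q`. -/
def IsAntichainIn (Q : FinPartOrd.{0}) (T : Finset ↥Q) : Prop :=
  ∀ x ∈ T, ∀ y ∈ T, x ≤ y → x = y

/-- The possible shapes of `A \ X` and `C \ X`: an antichain possibly together with a single
element below all of it and/or a single element above all of it, or a two-element chain
together with one incomparable element. -/
def GoodForm (Q : FinPartOrd.{0}) (S : Finset ↥Q) : Prop :=
  (∃ T : Finset ↥Q, IsAntichainIn Q T ∧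
    (S = T ∨
      (∃ b, b ∉ T ∧ S = insert b T ∧ ∀ x ∈ T, b < x) ∨
      (∃ t, t ∉ T ∧ S = insert t T ∧ ∀ x ∈ T, x < t) ∨
      (∃ b t, b ∉ T ∧ t ∉ T ∧ b ≠ t ∧ S = insert b (insert t T) ∧
        (∀ x ∈ T, b < x) ∧ ∀ x ∈ T, x < t))) ∨
  (∃ x y z : ↥Q, S = {x, y, z} ∧ x ≠ y ∧ x ≠ z ∧ y ≠ z ∧ x < y ∧
    ¬x ≤ z ∧ ¬z ≤ x ∧ ¬y ≤ z ∧ ¬z ≤ y)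

-- existence of downset of each size
lemma exists_downset_card (Q : FinPartOrd.{0}) (n : ℕ) (hn : n ≤ Fintype.card ↥Q) :
    ∃ D : Finset ↥Q, IsDownset Q D ∧ D.card = n := by
  induction n with
  | zero => exact ⟨∅, fun a b h _ => absurd h (by simp), rfl⟩
  | succ k ih =>
    obtain ⟨D, hD, hcard⟩ := ih (le_of_lt hn)
    have hne : (Finset.univ \ D).Nonempty := by
      rw [← Finset.card_pos, Finset.card_sdiff_of_subset (Finset.subset_univ D), Finset.card_univ, hcard]
      omega
    obtain ⟨m, hm, hmin⟩ : ∃ m ∈ Finset.univ \ D, ∀ x ∈ Finset.univ \ D, ¬x < m := (Finset.exists_minimal hne).imp fun m h => ⟨h.1, fun x hx hlt => lt_irrefl _ (lt_of_lt_of_le hlt (h.2 hx hlt.le))⟩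
    have hmD : m ∉ D := (Finset.mem_sdiff.mp hm).2
    refine ⟨insert m D, ?_, by rw [Finset.card_insert_of_notMem hmD, hcard]⟩
    intro a b ha hba
    rcases Finset.mem_insert.mp ha with rfl | ha
    · rcases eq_or_lt_of_le hba with rfl | hlt
      · exact Finset.mem_insert_self _ _
      · by_contra hb
        have hb' : b ∉ D := fun h => hb (Finset.mem_insert_of_mem h)
        exact hmin b (Finset.mem_sdiff.mpr ⟨Finset.mem_univ _, hb'⟩) hlt
    · exact Finset.mem_insert_of_mem (hD ha hba)

-- one exchange step
lemma exchange_step {n : ℕ} {Q : FinPartOrd.{0}} (A B : EGVert n Q) (hne : A.1 ≠ B.1) :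
    ∃ A' : EGVert n Q, (ExchangeGraph n Q).Adj A A' ∧
      (A'.1 \ B.1).card = (A.1 \ B.1).card - 1 ∧ (A.1 \ B.1).Nonempty := by
  obtain ⟨hAd, hAc⟩ := A.2
  obtain ⟨hBd, hBc⟩ := B.2
  have hABne : (A.1 \ B.1).Nonempty := by
    rw [Finset.sdiff_nonempty]
    intro hsub
    exact hne (Finset.eq_of_subset_of_card_le hsub (by rw [hAc, hBc]))
  have hBAne : (B.1 \ A.1).Nonempty := by
    rw [← Finset.card_pos, Finset.card_sdiff_comm (by rw [hAc, hBc]), Finset.card_pos]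
    exact hABne
  obtain ⟨a, ha, hamax⟩ : ∃ a ∈ A.1 \ B.1, ∀ x ∈ A.1 \ B.1, ¬a < x := (Finset.exists_maximal hABne).imp fun m h => ⟨h.1, fun x hx hlt => lt_irrefl _ (lt_of_lt_of_le hlt (h.2 hx hlt.le))⟩
  obtain ⟨b, hb, hbmin⟩ : ∃ b ∈ B.1 \ A.1, ∀ x ∈ B.1 \ A.1, ¬x < b := (Finset.exists_minimal hBAne).imp fun m h => ⟨h.1, fun x hx hlt => lt_irrefl _ (lt_of_lt_of_le hlt (h.2 hx hlt.le))⟩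
  have haA : a ∈ A.1 := (Finset.mem_sdiff.mp ha).1
  have haB : a ∉ B.1 := (Finset.mem_sdiff.mp ha).2
  have hbB : b ∈ B.1 := (Finset.mem_sdiff.mp hb).1
  have hbA : b ∉ A.1 := (Finset.mem_sdiff.mp hb).2
  have hab : a ≠ b := fun h => hbA (h ▸ haA)
  -- a is maximal in A
  have hamaxA : ∀ c ∈ A.1, a ≤ c → c = a := by
    intro c hc hac
    by_contra hca
    have hlt : a < c := lt_of_le_of_ne hac (fun h => hca h.symm)
    by_cases hcB : c ∈ B.1
    · exact haB (hBd hcB (le_of_lt hlt))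
    · exact hamax c (Finset.mem_sdiff.mpr ⟨hc, hcB⟩) hlt
  set A'f : Finset ↥Q := insert b (A.1.erase a) with hA'f
  have hdown : IsDownset Q A'f := by
    intro c d hc hdc
    rcases Finset.mem_insert.mp hc with rfl | hc
    · rcases eq_or_lt_of_le hdc with rfl | hlt
      · exact Finset.mem_insert_self _ _
      · have hdB : d ∈ B.1 := hBd hbB (le_of_lt hlt)
        by_cases hdA : d ∈ A.1
        · have : d ≠ a := fun h => haB (h ▸ hdB)
          exact Finset.mem_insert_of_mem (Finset.mem_erase.mpr ⟨this, hdA⟩)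
        · exact absurd hlt (hbmin d (Finset.mem_sdiff.mpr ⟨hdB, hdA⟩))
    · obtain ⟨hca, hcA⟩ := Finset.mem_erase.mp hc
      have hdA : d ∈ A.1 := hAd hcA hdc
      have hda : d ≠ a := by
        rintro rfl
        exact hca (hamaxA c hcA hdc)
      exact Finset.mem_insert_of_mem (Finset.mem_erase.mpr ⟨hda, hdA⟩)
  have hbe : b ∉ A.1.erase a := fun h => hbA (Finset.mem_of_mem_erase h)
  have hcard : A'f.card = n := by
    have hpos : 0 < n := hAc ▸ Finset.card_pos.mpr ⟨a, haA⟩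
    rw [Finset.card_insert_of_notMem hbe, Finset.card_erase_of_mem haA, hAc]
    omega
  refine ⟨⟨A'f, hdown, hcard⟩, ⟨?_, ?_⟩, ?_, hABne⟩
  · -- A \ A' = {a}
    have : A.1 \ A'f = {a} := by
      ext x
      simp only [hA'f, Finset.mem_sdiff, Finset.mem_insert, Finset.mem_erase,
        Finset.mem_singleton]
      constructor
      · rintro ⟨hx, hx2⟩
        push_neg at hx2
        by_contra hxa
        exact (hx2.2 hxa) hx
      · rintro rfl
        exact ⟨haA, by push_neg; exact ⟨hab, fun h => absurd rfl h⟩⟩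
    rw [this, Finset.card_singleton]
  · -- A' \ A = {b}
    have : A'f \ A.1 = {b} := by
      ext x
      simp only [hA'f, Finset.mem_sdiff, Finset.mem_insert, Finset.mem_erase,
        Finset.mem_singleton]
      constructor
      · rintro ⟨hx1, hx2⟩
        rcases hx1 with rfl | ⟨_, hxA⟩
        · rfl
        · exact absurd hxA hx2
      · rintro rfl
        exact ⟨Or.inl rfl, hbA⟩
    rw [this, Finset.card_singleton]
  · -- A' \ B = (A\B).erase a
    have : A'f \ B.1 = (A.1 \ B.1).erase a := by
      ext x
      simp only [hA'f, Finset.mem_sdiff, Finset.mem_insert, Finset.mem_erase]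
      constructor
      · rintro ⟨hx1, hx2⟩
        rcases hx1 with rfl | ⟨hxa, hxA⟩
        · exact absurd hbB hx2
        · exact ⟨hxa, hxA, hx2⟩
      · rintro ⟨hxa, hxA, hxB⟩
        exact ⟨Or.inr ⟨hxa, hxA⟩, hxB⟩
    rw [this, Finset.card_erase_of_mem (Finset.mem_sdiff.mpr ⟨haA, haB⟩)]

-- walk of length |A\B|
lemma exists_walk {n : ℕ} {Q : FinPartOrd.{0}} :
    ∀ (k : ℕ) (A B : EGVert n Q), (A.1 \ B.1).card = k →
      ∃ w : (ExchangeGraph n Q).Walk A B, w.length = k := by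
  intro k
  induction k with
  | zero =>
    intro A B h
    have hsub : A.1 ⊆ B.1 := Finset.sdiff_eq_empty_iff_subset.mp (Finset.card_eq_zero.mp h)
    have : A.1 = B.1 := Finset.eq_of_subset_of_card_le hsub (by rw [A.2.2, B.2.2])
    have hAB : A = B := Subtype.ext this
    subst hAB
    exact ⟨SimpleGraph.Walk.nil, rfl⟩
  | succ k ih =>
    intro A B h
    have hne : A.1 ≠ B.1 := by
      intro heq
      rw [heq, Finset.sdiff_self] at h
      simp at h
    obtain ⟨A', hadj, hcard, _⟩ := exchange_step A B hne
    rw [h] at hcard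
    obtain ⟨w, hw⟩ := ih A' B (by omega)
    exact ⟨SimpleGraph.Walk.cons hadj w, by simp [hw]⟩

-- lower bound
lemma card_le_walk_length {n : ℕ} {Q : FinPartOrd.{0}} {A B : EGVert n Q}
    (w : (ExchangeGraph n Q).Walk A B) : (A.1 \ B.1).card ≤ w.length := by
  induction w with
  | nil => simp
  | @cons u v z h p ih =>
    have hsub : u.1 \ z.1 ⊆ (v.1 \ z.1) ∪ (u.1 \ v.1) := by
      intro x hx
      obtain ⟨hxu, hxz⟩ := Finset.mem_sdiff.mp hx
      by_cases hxv : x ∈ v.1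
      · exact Finset.mem_union_left _ (Finset.mem_sdiff.mpr ⟨hxv, hxz⟩)
      · exact Finset.mem_union_right _ (Finset.mem_sdiff.mpr ⟨hxu, hxv⟩)
    calc (u.1 \ z.1).card ≤ ((v.1 \ z.1) ∪ (u.1 \ v.1)).card := Finset.card_le_card hsub
      _ ≤ (v.1 \ z.1).card + (u.1 \ v.1).card := Finset.card_union_le _ _
      _ ≤ p.length + 1 := by rw [(show (u.1 \ v.1).card = 1 ∧ (v.1 \ u.1).card = 1 from h).1]; omega
      _ = (SimpleGraph.Walk.cons h p).length := by simp [Nat.add_comm]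

/-- For any finite poset `Q` and `1 ≤ n ≤ |Q|`, the exchange graph
`G_n(Q)` is connected; moreover the graph distance between two vertices `A`, `B` is
`|A \\ (A ∩ B)|`, and in particular the diameter of `G_n(Q)` is at most `n`. -/
theorem exchangeGraph_connected_dist (n : ℕ) (Q : FinPartOrd.{0}) (hn : 1 ≤ n)
    (hnQ : n ≤ size Q) :
    (ExchangeGraph n Q).Connected ∧
      (∀ A B : EGVert n Q, (ExchangeGraph n Q).dist A B = (A.1 \ (A.1 ∩ B.1)).card) ∧
      ∀ A B : EGVert n Q, (ExchangeGraph n Q).dist A B ≤ n := by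
  have hnQ' : n ≤ Fintype.card ↥Q := hnQ
  have hreach : ∀ A B : EGVert n Q, (ExchangeGraph n Q).Reachable A B := by
    intro A B
    obtain ⟨w, _⟩ := exists_walk _ A B rfl
    exact ⟨w⟩
  have hdist : ∀ A B : EGVert n Q, (ExchangeGraph n Q).dist A B = (A.1 \ B.1).card := by
    intro A B
    apply le_antisymm
    · obtain ⟨w, hw⟩ := exists_walk _ A B rfl
      exact hw ▸ SimpleGraph.dist_le w
    · obtain ⟨w, hw⟩ := (hreach A B).exists_walk_length_eq_dist
      exact hw ▸ card_le_walk_length w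
  have hne : Nonempty (EGVert n Q) := by
    obtain ⟨D, hD, hc⟩ := exists_downset_card Q n hnQ'
    exact ⟨⟨D, hD, hc⟩⟩
  refine ⟨(SimpleGraph.connected_iff _).mpr ⟨hreach, hne⟩, ?_, ?_⟩
  · intro A B
    rw [hdist, Finset.sdiff_inter_self_left]
  · intro A B
    rw [hdist]
    calc (A.1 \ B.1).card ≤ A.1.card := Finset.card_le_card (Finset.sdiff_subset)
      _ = n := A.2.2
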